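/- Let Q denote the standard Gaussian tail function. Then the ratio of Gaussian densities exp(−(t + log(1/Q(t) − 1)/(2t))²/2) / exp(−t²/2) tends to 0 as t → +∞. -/

import Mathlib

open Real Filter Topology

/-- The standard Gaussian tail function `Q(x) = (1/√(2π)) ∫_x^∞ e^{−t²/2} dt`. -/
noncomputable def gaussQ (x : ℝ) : ℝ :=
  (1 / Real.sqrt (2 * Real.pi)) * ∫ t in Set.Ioi x, Real.exp (-t ^ 2 / 2)

lemma gauss_integrable : MeasureTheory.Integrable (fun t : ℝ => Real.exp (-t ^ 2 / 2)) := by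
  have := integrable_exp_neg_mul_sq (b := (1/2 : ℝ)) (by norm_num)
  convert this using 2 with t
  ring_nf

lemma gaussQ_pos (x : ℝ) : 0 < gaussQ x := by
  unfold gaussQ
  apply mul_pos
  · positivity
  · apply MeasureTheory.setIntegral_pos_iff_support_of_nonneg_ae ?_ ?_ |>.2
    · have : (Function.support fun t : ℝ => Real.exp (-t ^ 2 / 2)) = Set.univ := by
        ext t; simp [Real.exp_ne_zero]
      rw [this, Set.univ_inter]
      simp [Real.volume_Ioi]
    · filter_upwards with t using (Real.exp_pos _).le
    · exact gauss_integrable.integrableOn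

lemma gaussQ_tendsto_zero : Tendsto gaussQ atTop (𝓝 0) := by
  have h : Tendsto (fun x : ℝ => ∫ t in Set.Ioi x, Real.exp (-t ^ 2 / 2)) atTop (𝓝 0) := by
    have hempty : (⋂ x : ℝ, Set.Ioi x) = (∅ : Set ℝ) := by
      apply Set.eq_empty_iff_forall_notMem.2
      intro y hy
      exact lt_irrefl y (Set.mem_iInter.1 hy y)
    have := MeasureTheory.tendsto_setIntegral_of_antitone
      (f := fun t : ℝ => Real.exp (-t ^ 2 / 2)) (μ := MeasureTheory.volume)
      (s := fun x : ℝ => Set.Ioi x) (fun x => measurableSet_Ioi)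
      (fun a b hab => Set.Ioi_subset_Ioi hab) ⟨0, gauss_integrable.integrableOn⟩
    rwa [hempty, MeasureTheory.setIntegral_empty] at this
  have := h.const_mul (1 / Real.sqrt (2 * Real.pi))
  simp only [mul_zero] at this
  exact this

/-- The ratio of Gaussian densities
`exp(−(t + log(1/Q(t) − 1)/(2t))²/2) / exp(−t²/2) → 0` as `t → +∞`. -/
theorem density_ratio_tendsto_zero :
    Tendsto (fun t : ℝ =>
        Real.exp (-(t + Real.log (1 / gaussQ t - 1) / (2 * t)) ^ 2 / 2) /
          Real.exp (-t ^ 2 / 2))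
      atTop (𝓝 0) := by
  -- 1/Q - 1 → ∞
  have hQtop : Tendsto (fun t => 1 / gaussQ t - 1) atTop atTop := by
    have h1 : Tendsto gaussQ atTop (𝓝[>] 0) :=
      tendsto_nhdsWithin_iff.2 ⟨gaussQ_tendsto_zero, Eventually.of_forall fun t => gaussQ_pos t⟩
    have h2 : Tendsto (fun t => 1 / gaussQ t) atTop atTop := by
      exact h1.inv_tendsto_nhdsGT_zero.congr (fun t => by simp [one_div])
    exact tendsto_atTop_add_const_right _ (-1) h2 |>.congr (fun t => by ring)
  have hlog : Tendsto (fun t => Real.log (1 / gaussQ t - 1)) atTop atTop :=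
    Real.tendsto_log_atTop.comp hQtop
  -- upper bound tends to 0
  have hbound : Tendsto (fun t => Real.exp (-(Real.log (1 / gaussQ t - 1)) / 2)) atTop (𝓝 0) := by
    apply Real.tendsto_exp_atBot.comp
    apply Tendsto.atBot_div_const (by norm_num)
    exact tendsto_neg_atBot_iff.2 hlog
  -- squeeze
  apply squeeze_zero_norm' _ hbound
  filter_upwards [eventually_gt_atTop (0 : ℝ)] with t ht
  set L := Real.log (1 / gaussQ t - 1) with hL
  have ht' : t ≠ 0 := ne_of_gt ht
  have key : Real.exp (-(t + L / (2 * t)) ^ 2 / 2) / Real.exp (-t ^ 2 / 2)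
      = Real.exp (-L / 2 - (L / (2 * t)) ^ 2 / 2) := by
    rw [← Real.exp_sub]
    congr 1
    field_simp
    ring
  rw [Real.norm_eq_abs, abs_of_pos (by rw [key]; exact Real.exp_pos _), key]
  apply Real.exp_le_exp.2
  have : (0:ℝ) ≤ (L / (2 * t)) ^ 2 / 2 := by positivity
  linarith
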